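/- Let Γ be a countable discrete amenable group containing an element s₀ of infinite order such that the cyclic subgroup generated by s₀ has infinite index in Γ. Let (X, θ) be a compact metric space on which Γ acts by homeomorphisms such that for every s ∈ Γ there is a constant K_s ≥ 1 with θ(sx, sy) ≤ K_s·θ(x,y) for all x, y ∈ X. Assume there exist q ∈ ℕ and constants C₁, C₂ ≥ 1 such that for every δ' ∈ (0,1) there is a finite subset Z ⊆ X of cardinality at most C₂·(4/δ')^q with the property that every point of X is within distance C₁δ' of some point of Z. Then for every ε > 0 one has limsup_F (log N_ε(X, θ_{F,∞}))/|F| ≤ 0, where limsup_F denotes the limit superior as the nonempty finite subset F of Γ becomes more and more left invariant. -/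
import Mathlib


/-- The supremum of cardinalities of subsets of `Z` that are pairwise `sep`-separated. -/
noncomputable def sepCount {P : Type*} (Z : Set P) (sep : P → P → Prop) : ℕ :=
  sSup {n : ℕ | ∃ W : Finset P, ↑W ⊆ Z ∧ (∀ x ∈ W, ∀ y ∈ W, x ≠ y → sep x y) ∧ W.card = n}

/-- `F` belongs to `B(K, δ)`: `F` is a nonempty finite subset of `Γ` such that
`|{t ∈ F : Kt ⊆ F}| ≥ (1 − δ)|F|`. -/
def memApproxInv {Γ : Type*} [Group Γ] [DecidableEq Γ] (K : Finset Γ) (δ : ℝ)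
    (F : Finset Γ) : Prop :=
  F.Nonempty ∧ (1 - δ) * (F.card : ℝ) ≤ ((F.filter fun t => ∀ k ∈ K, k * t ∈ F).card : ℝ)

/-- The limit superior of `ψ(F)` as the nonempty finite subset `F ⊆ Γ` becomes more and
more left invariant: `inf_{(K,δ)} sup_{F ∈ B(K,δ)} ψ(F)`. -/
noncomputable def limsupFolner {Γ : Type*} [Group Γ] [DecidableEq Γ]
    (ψ : Finset Γ → ℝ) : ℝ :=
  ⨅ p : {p : Finset Γ × ℝ // p.1.Nonempty ∧ 0 < p.2},
    ⨆ F : {F : Finset Γ // memApproxInv p.1.1 p.1.2 F}, ψ F.1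

open Finset

/-- Iterated Lipschitz bound for powers acting. -/
lemma dist_pow_smul_le {Γ X : Type*} [Group Γ] [MetricSpace X] [MulAction Γ X]
    (s : Γ) (K : ℝ) (hK : 0 ≤ K) (hd : ∀ x y : X, dist (s • x) (s • y) ≤ K * dist x y) :
    ∀ (i : ℕ) (x y : X), dist (s ^ i • x) (s ^ i • y) ≤ K ^ i * dist x y := by
  intro i
  induction i with
  | zero => intro x y; simp
  | succ i ih =>
    intro x y
    have h1 : (s ^ (i+1) : Γ) • x = s ^ i • (s • x) := by
      rw [pow_succ, mul_smul]
    have h2 : (s ^ (i+1) : Γ) • y = s ^ i • (s • y) := by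
      rw [pow_succ, mul_smul]
    rw [h1, h2]
    calc dist (s ^ i • (s • x)) (s ^ i • (s • y)) ≤ K ^ i * dist (s • x) (s • y) := ih _ _
      _ ≤ K ^ i * (K * dist x y) := by
          exact mul_le_mul_of_nonneg_left (hd x y) (pow_nonneg hK i)
      _ = K ^ (i+1) * dist x y := by ring

/-- Greedy covering lemma. -/
lemma greedy_cover {Γ : Type*} [Group Γ] [DecidableEq Γ] (Kg F G : Finset Γ) (hGF : G ⊆ F)
    (hcand : ∀ t ∈ G, Kg.card ≤ (F.filter fun v => ∃ k ∈ Kg, k * v = t).card) :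
    ∀ N : ℕ, ∃ V : Finset Γ, V.card ≤ N ∧
      ((G.filter fun t => ¬ ∃ v ∈ V, ∃ k ∈ Kg, k * v = t).card : ℝ) ≤
        (G.card : ℝ) * (max 0 (1 - (Kg.card : ℝ) / (F.card : ℝ))) ^ N := by
  intro N
  induction N with
  | zero =>
    refine ⟨∅, le_refl _, ?_⟩
    rw [pow_zero, mul_one]
    have : (G.filter fun t => ¬ ∃ v ∈ (∅ : Finset Γ), ∃ k ∈ Kg, k * v = t) = G := by
      apply Finset.filter_true_of_mem
      intro t _ h
      obtain ⟨v, hv, _⟩ := h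
      exact absurd hv (Finset.notMem_empty v)
    rw [this]
  | succ N ih =>
    obtain ⟨V, hVc, hU⟩ := ih
    set ρ : ℝ := max 0 (1 - (Kg.card : ℝ) / (F.card : ℝ)) with hρ
    have hρ0 : 0 ≤ ρ := le_max_left _ _
    set U := G.filter fun t => ¬ ∃ v ∈ V, ∃ k ∈ Kg, k * v = t with hUdef
    by_cases hUe : U = ∅
    · refine ⟨V, le_trans hVc (Nat.le_succ _), ?_⟩
      have hsub : (G.filter fun t => ¬ ∃ v ∈ V, ∃ k ∈ Kg, k * v = t) = ∅ := hUe
      rw [hsub]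
      simp only [Finset.card_empty, Nat.cast_zero]
      positivity
    · have hUne : U.Nonempty := Finset.nonempty_of_ne_empty hUe
      have hFne : F.Nonempty := ⟨hUne.choose, hGF (Finset.mem_of_mem_filter _ hUne.choose_spec)⟩
      have hFpos : 0 < F.card := Finset.card_pos.mpr hFne
      have hsum : (Kg.card * U.card : ℕ) ≤
          ∑ v ∈ F, (U.filter fun t => ∃ k ∈ Kg, k * v = t).card := by
        have hswap : ∑ v ∈ F, (U.filter fun t => ∃ k ∈ Kg, k * v = t).card
            = ∑ t ∈ U, (F.filter fun v => ∃ k ∈ Kg, k * v = t).card := by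
          simp only [Finset.card_filter]
          rw [Finset.sum_comm]
        rw [hswap]
        calc (Kg.card * U.card : ℕ) = ∑ _t ∈ U, Kg.card := by
              rw [Finset.sum_const, smul_eq_mul, mul_comm]
          _ ≤ ∑ t ∈ U, (F.filter fun v => ∃ k ∈ Kg, k * v = t).card := by
              apply Finset.sum_le_sum
              intro t ht
              exact hcand t (Finset.mem_of_mem_filter _ ht)
      have hex : ∃ v₀ ∈ F, (Kg.card * U.card : ℕ) ≤
          F.card * (U.filter fun t => ∃ k ∈ Kg, k * v₀ = t).card := by
        by_contra hcon
        push_neg at hcon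
        have hlt : ∑ v ∈ F, F.card * (U.filter fun t => ∃ k ∈ Kg, k * v = t).card
            < ∑ _v ∈ F, Kg.card * U.card :=
          Finset.sum_lt_sum_of_nonempty hFne (fun v hv => hcon v hv)
        rw [Finset.sum_const, smul_eq_mul, ← Finset.mul_sum] at hlt
        have := Nat.mul_le_mul_left F.card hsum
        omega
      obtain ⟨v₀, hv₀F, hv₀⟩ := hex
      refine ⟨insert v₀ V, le_trans (Finset.card_insert_le _ _) (Nat.succ_le_succ hVc), ?_⟩
      have hU' : (G.filter fun t => ¬ ∃ v ∈ insert v₀ V, ∃ k ∈ Kg, k * v = t)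
          = U.filter fun t => ¬ ∃ k ∈ Kg, k * v₀ = t := by
        rw [hUdef, Finset.filter_filter]
        apply Finset.filter_congr
        intro t _
        simp only [Finset.mem_insert]
        constructor
        · intro h
          constructor
          · intro ⟨v, hv, hk⟩; exact h ⟨v, Or.inr hv, hk⟩
          · intro hk; exact h ⟨v₀, Or.inl rfl, hk⟩
        · rintro ⟨h1, h2⟩ ⟨v, hv | hv, hk⟩
          · exact h2 (hv ▸ hk)
          · exact h1 ⟨v, hv, hk⟩
      rw [hU']
      have hsplit : ((U.filter fun t => ¬ ∃ k ∈ Kg, k * v₀ = t).card : ℝ)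
          = (U.card : ℝ) - ((U.filter fun t => ∃ k ∈ Kg, k * v₀ = t).card : ℝ) := by
        have := Finset.card_filter_add_card_filter_not
          (s := U) (p := fun t => ∃ k ∈ Kg, k * v₀ = t)
        push_cast [← this]
        ring
      rw [hsplit]
      have hc0 : (Kg.card : ℝ) * U.card / F.card ≤
          ((U.filter fun t => ∃ k ∈ Kg, k * v₀ = t).card : ℝ) := by
        rw [div_le_iff₀ (by exact_mod_cast hFpos)]
        calc (Kg.card : ℝ) * U.card
            ≤ (F.card : ℝ) * (U.filter fun t => ∃ k ∈ Kg, k * v₀ = t).card := by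
              exact_mod_cast hv₀
          _ = _ := by ring
      have step1 : (U.card : ℝ) - ((U.filter fun t => ∃ k ∈ Kg, k * v₀ = t).card : ℝ)
          ≤ (U.card : ℝ) * ρ := by
        have h2 : (U.card : ℝ) - (Kg.card : ℝ) * U.card / F.card
            = (U.card : ℝ) * (1 - (Kg.card : ℝ) / F.card) := by ring
        have h3 : (U.card : ℝ) * (1 - (Kg.card : ℝ) / F.card) ≤ (U.card : ℝ) * ρ :=
          mul_le_mul_of_nonneg_left (le_max_right _ _) (Nat.cast_nonneg _)
        linarith
      calc (U.card : ℝ) - ((U.filter fun t => ∃ k ∈ Kg, k * v₀ = t).card : ℝ)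
          ≤ (U.card : ℝ) * ρ := step1
        _ ≤ ((G.card : ℝ) * ρ ^ N) * ρ := mul_le_mul_of_nonneg_right hU hρ0
        _ = (G.card : ℝ) * ρ ^ (N + 1) := by ring



/-- Coding bound: a separated set injects into codes on blocks and remainder. -/
lemma sep_card_le {Γ X : Type*} [Group Γ] [DecidableEq Γ] [MetricSpace X] [MulAction Γ X]
    (Fs V Rb
 Kg : Finset Γ) (ε βf βc : ℝ)
    (Zf Zc : Finset X) (zf zc : X → X)
    (hzf1 : ∀ x, zf x ∈ Zf) (hzc1 : ∀ x, zc x ∈ Zc)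
    (hzf2 : ∀ x, dist x (zf x) ≤ βf) (hzc2 : ∀ x, dist x (zc x) ≤ βc)
    (hblock : ∀ k ∈ Kg, ∀ v : Γ, ∀ x y : X,
      dist (v • x) (v • y) ≤ 2*βf → dist ((k*v) • x) ((k*v) • y) ≤ ε)
    (hrest : 2*βc ≤ ε)
    (hR : ∀ s ∈ Fs, (¬ ∃ v ∈ V, ∃ k ∈ Kg, k * v = s) → s ∈ Rb)
    (W : Finset X)
    (hsep : ∀ x ∈ W, ∀ y ∈ W, x ≠ y → ∃ s ∈ Fs, ε < dist (s • x) (s • y)) :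
    W.card ≤ Zf.card ^ V.card * Zc.card ^ Rb.card := by
  classical
  have hinj : W.card ≤ Fintype.card ((↥V → ↥Zf) × (↥Rb → ↥Zc)) := by
    have hc := Finset.card_le_card_of_injOn
      (s := W) (t := (Finset.univ : Finset ((↥V → ↥Zf) × (↥Rb → ↥Zc))))
      (fun x : X => ((fun v : ↥V => (⟨zf ((v : Γ) • x), hzf1 _⟩ : ↥Zf)),
                     (fun s : ↥Rb => (⟨zc ((s : Γ) • x), hzc1 _⟩ : ↥Zc))))
      (fun a _ => Finset.mem_univ _) ?_
    · simpa [Finset.card_univ] using hc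
    · intro x hx y hy hxy
      by_contra hne
      obtain ⟨s, hsF, hd⟩ := hsep x hx y hy hne
      simp only [Prod.mk.injEq] at hxy
      obtain ⟨hxy1, hxy2⟩ := hxy
      by_cases hs : ∃ v ∈ V, ∃ k ∈ Kg, k * v = s
      · obtain ⟨v, hvV, k, hk, rfl⟩ := hs
        have h1 : zf (v • x) = zf (v • y) := by
          have h2 := congrFun hxy1 ⟨v, hvV⟩
          exact Subtype.ext_iff.mp h2
        have hdv : dist (v • x) (v • y) ≤ 2*βf := by
          have d1 : dist (v • x) (zf (v • x)) ≤ βf := hzf2 _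
          have d2 : dist (v • y) (zf (v • y)) ≤ βf := hzf2 _
          rw [← h1] at d2
          have h3 := dist_triangle_right (v • x) (v • y) (zf (v • x))
          linarith only [d1, d2, h3]
        exact absurd (hblock k hk v x y hdv) (not_le.mpr hd)
      · have hsR : s ∈ Rb := hR s hsF hs
        have h1 : zc (s • x) = zc (s • y) := by
          have h2 := congrFun hxy2 ⟨s, hsR⟩
          exact Subtype.ext_iff.mp h2
        have hds : dist (s • x) (s • y) ≤ 2*βc := by
          have d1 : dist (s • x) (zc (s • x)) ≤ βc := hzc2 _
          have d2 : dist (s • y) (zc (s • y)) ≤ βc := hzc2 _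
          rw [← h1] at d2
          have h3 := dist_triangle_right (s • x) (s • y) (zc (s • x))
          linarith only [d1, d2, h3]
        have : dist (s • x) (s • y) ≤ ε := le_trans hds hrest
        exact absurd this (not_le.mpr hd)
  rwa [Fintype.card_prod, Fintype.card_fun, Fintype.card_fun, Fintype.card_coe,
    Fintype.card_coe, Fintype.card_coe, Fintype.card_coe] at hinj


set_option maxHeartbeats 1000000 in
lemma key_lemma {Γ X : Type*} [Group Γ] [DecidableEq Γ] [MetricSpace X] [MulAction Γ X]
    (ε ε' η δ L Cs Cm LZf K0 Mx C₁ : ℝ) (q n m : ℕ)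
    (c : ℕ → Γ) (s₀ : Γ) (Klip : Γ → ℝ)
    (Kg Kbig : Finset Γ)
    (Zf Zc : Finset X) (zf zc : X → X) (δf δc : ℝ)
    (hη : 0 < η) (hδ0 : 0 < δ) (hδ2 : δ ≤ 1/2) (hδCs : 2*(δ*Cs) ≤ η/2)
    (hlogδ : 0 ≤ Real.log (1/δ)) (hLdef : L = Real.log (1/δ) + 1)
    (hε'0 : 0 < ε') (hε'ε : ε' ≤ ε)
    (hC₁0 : 0 < C₁)
    (hK1 : ∀ s, 1 ≤ Klip s)
    (hKd : ∀ (s : Γ) (x y : X), dist (s • x) (s • y) ≤ Klip s * dist x y)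
    (hK0def : K0 = Klip s₀) (hK0 : 1 ≤ K0)
    (hMxj : ∀ j, j < m → Klip (c j) ≤ Mx) (hMx0 : 0 < Mx)
    (hn0 : 0 < n) (hm0 : 0 < m) (hm1 : (1:ℝ) ≤ (m:ℝ))
    (hδfdef : δf = ε'/(4*C₁*Mx*K0^n)) (hδcdef : δc = ε'/(4*C₁))
    (hKgcard : Kg.card = n*m) (hKgsub : Kg ⊆ Kbig)
    (hKginv : ∀ k ∈ Kg, k⁻¹ ∈ Kbig)
    (hKgstruct : ∀ k ∈ Kg, ∃ i j : ℕ, i < n ∧ j < m ∧ c j * s₀ ^ i = k)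
    (hzf1 : ∀ x, zf x ∈ Zf) (hzf2 : ∀ x, dist x (zf x) ≤ C₁*δf)
    (hzc1 : ∀ x, zc x ∈ Zc) (hzc2 : ∀ x, dist x (zc x) ≤ C₁*δc)
    (hlogZf : Real.log (Zf.card) ≤ LZf) (hlogZc : Real.log (Zc.card) ≤ Cs)
    (hLZf0 : 0 ≤ LZf) (hCs0 : 0 ≤ Cs)
    (hLZfdef : LZf = Cm + (q:ℝ)*((n:ℝ)*Real.log K0))
    (hnb : L*Cm ≤ (n:ℝ)*η/4) (hmb : L*((q:ℝ)*Real.log K0) ≤ (m:ℝ)*η/4)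
    (Fs : Finset Γ) (hFs : memApproxInv Kbig δ Fs) :
    Real.log (sepCount (Set.univ : Set X)
      (fun x y => ∃ s ∈ Fs, ε < dist (s • x) (s • y))) / (Fs.card:ℝ) ≤ η := by
  have hK0pos : (0:ℝ) < K0 := lt_of_lt_of_le one_pos hK0
  have hL1 : 1 ≤ L := by rw [hLdef]; linarith only [hlogδ]
  have hLpos : 0 < L := by linarith only [hL1]
  have hlogK0 : 0 ≤ Real.log K0 := Real.log_nonneg hK0
  obtain ⟨hFne, hFfil⟩ := hFs
  have hFpos : (0:ℝ) < Fs.card := by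
    exact_mod_cast Finset.card_pos.mpr hFne
  set G := Fs.filter (fun t => ∀ k ∈ Kbig, k * t ∈ Fs) with hGdef
  have hGF : G ⊆ Fs := Finset.filter_subset _ _
  have hGcard : (1-δ)*(Fs.card:ℝ) ≤ (G.card : ℝ) := hFfil
  have hGne : G.Nonempty := by
    rcases Finset.eq_empty_or_nonempty G with h | h
    · exfalso
      rw [h] at hGcard
      simp only [Finset.card_empty, Nat.cast_zero] at hGcard
      nlinarith only [hGcard, hδ2, hFpos]
    · exact h
  obtain ⟨t₀, ht₀G⟩ := hGne
  have ht₀ : ∀ k ∈ Kbig, k * t₀ ∈ Fs := (Finset.mem_filter.mp ht₀G).2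
  have hrF : Kg.card ≤ Fs.card := by
    have hsub : Kg.image (fun k => k * t₀) ⊆ Fs := by
      intro x hx
      obtain ⟨k, hk, rfl⟩ := Finset.mem_image.mp hx
      exact ht₀ k (hKgsub hk)
    calc Kg.card = (Kg.image (fun k => k * t₀)).card :=
          (Finset.card_image_of_injective _ (fun a b h => mul_right_cancel h)).symm
      _ ≤ Fs.card := Finset.card_le_card hsub
  have hrpos : 0 < Kg.card := by
    rw [hKgcard]; exact Nat.mul_pos hn0 hm0
  have hrposR : (0:ℝ) < Kg.card := by exact_mod_cast hrpos
  have hcand : ∀ t ∈ G, Kg.card ≤ (Fs.filter fun v => ∃ k ∈ Kg, k * v = t).card := by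
    intro t ht
    have himg : Kg.image (fun k => k⁻¹ * t) ⊆ Fs.filter (fun v => ∃ k ∈ Kg, k * v = t) := by
      intro x hx
      obtain ⟨k, hk, rfl⟩ := Finset.mem_image.mp hx
      refine Finset.mem_filter.mpr ⟨?_, ⟨k, hk, by group⟩⟩
      exact (Finset.mem_filter.mp ht).2 k⁻¹ (hKginv k hk)
    calc Kg.card = (Kg.image fun k => k⁻¹ * t).card :=
          (Finset.card_image_of_injective _
            (fun a b h => inv_injective (mul_right_cancel h))).symm
      _ ≤ _ := Finset.card_le_card himg
  set av : ℝ := (Fs.card : ℝ) * Real.log (1/δ) / (Kg.card : ℝ) with havdef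
  have hav0 : 0 ≤ av := by
    rw [havdef]
    exact div_nonneg (mul_nonneg (Nat.cast_nonneg _) hlogδ) (Nat.cast_nonneg _)
  clear_value av
  set kk := max 1 ⌈av⌉₊ with hkkdef
  clear_value kk
  have hkka : av ≤ (kk:ℝ) := by
    calc av ≤ (⌈av⌉₊:ℝ) := Nat.le_ceil av
      _ ≤ (kk:ℝ) := by exact_mod_cast (hkkdef ▸ le_max_right 1 ⌈av⌉₊)
  have hkk1 : 1 ≤ kk := hkkdef ▸ le_max_left 1 ⌈av⌉₊
  obtain ⟨V, hVcard, hVU⟩ := greedy_cover Kg Fs G hGF hcand kk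
  set Ufin := G.filter (fun t => ¬ ∃ v ∈ V, ∃ k ∈ Kg, k * v = t) with hUfindef
  have hUsmall : (Ufin.card : ℝ) ≤ δ * Fs.card := by
    set ρ : ℝ := max 0 (1 - (Kg.card:ℝ)/(Fs.card:ℝ)) with hρdef
    have hρ0 : 0 ≤ ρ := le_max_left _ _
    have hρe : ρ ≤ Real.exp (-((Kg.card:ℝ)/(Fs.card:ℝ))) := by
      apply max_le (Real.exp_nonneg _)
      have h := Real.add_one_le_exp (-((Kg.card:ℝ)/(Fs.card:ℝ)))
      linarith only [h]
    have hpow : ρ^kk ≤ Real.exp (-((Kg.card:ℝ)/(Fs.card:ℝ)))^kk :=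
      pow_le_pow_left₀ hρ0 hρe kk
    have hexp : Real.exp (-((Kg.card:ℝ)/(Fs.card:ℝ)))^kk
        = Real.exp ((kk:ℝ) * (-((Kg.card:ℝ)/(Fs.card:ℝ)))) := by
      rw [Real.exp_nat_mul]
    have hlogr : Real.log (1/δ) ≤ (kk:ℝ) * (Kg.card:ℝ) / (Fs.card:ℝ) := by
      rw [le_div_iff₀ hFpos]
      rw [havdef] at hkka
      rw [div_le_iff₀ hrposR] at hkka
      linarith only [hkka]
    have hexple : Real.exp ((kk:ℝ) * (-((Kg.card:ℝ)/(Fs.card:ℝ)))) ≤ δ := by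
      have h1 : (kk:ℝ) * (-((Kg.card:ℝ)/(Fs.card:ℝ))) = -((kk:ℝ) * (Kg.card:ℝ) / (Fs.card:ℝ)) := by
        ring
      rw [h1]
      calc Real.exp (-((kk:ℝ) * (Kg.card:ℝ) / (Fs.card:ℝ)))
          ≤ Real.exp (-Real.log (1/δ)) := Real.exp_le_exp.mpr (by linarith only [hlogr])
        _ = δ := by
            rw [one_div, Real.log_inv, neg_neg, Real.exp_log hδ0]
    calc (Ufin.card:ℝ) ≤ (G.card:ℝ) * ρ^kk := hVU
      _ ≤ (Fs.card:ℝ) * ρ^kk := by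
          apply mul_le_mul_of_nonneg_right _ (pow_nonneg hρ0 kk)
          exact_mod_cast Finset.card_le_card hGF
      _ ≤ (Fs.card:ℝ) * δ := by
          apply mul_le_mul_of_nonneg_left _ (le_of_lt hFpos)
          calc ρ^kk ≤ Real.exp (-((Kg.card:ℝ)/(Fs.card:ℝ)))^kk := hpow
            _ = _ := hexp
            _ ≤ δ := hexple
      _ = δ * Fs.card := mul_comm _ _
  set Rb := Fs.filter (fun s => ¬ ∃ v ∈ V, ∃ k ∈ Kg, k * v = s) with hRbdef
  have hRsmall : (Rb.card : ℝ) ≤ 2*δ*(Fs.card:ℝ) := by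
    have hsub : Rb ⊆ (Fs \ G) ∪ Ufin := by
      intro t ht
      obtain ⟨htF, htn⟩ := Finset.mem_filter.mp ht
      by_cases hg : t ∈ G
      · exact Finset.mem_union_right _ (Finset.mem_filter.mpr ⟨hg, htn⟩)
      · exact Finset.mem_union_left _ (Finset.mem_sdiff.mpr ⟨htF, hg⟩)
    have h1 : Rb.card ≤ (Fs \ G).card + Ufin.card :=
      le_trans (Finset.card_le_card hsub) (Finset.card_union_le _ _)
    have h2 : ((Fs \ G).card : ℝ) = (Fs.card:ℝ) - G.card := by
      rw [Finset.card_sdiff_of_subset hGF]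
      have := Finset.card_le_card hGF
      push_cast [Nat.cast_sub this]
      ring
    have h3 : ((Fs \ G).card:ℝ) ≤ δ * Fs.card := by
      rw [h2]; linarith only [hGcard]
    calc (Rb.card:ℝ) ≤ ((Fs \ G).card:ℝ) + (Ufin.card:ℝ) := by exact_mod_cast h1
      _ ≤ δ*Fs.card + δ*Fs.card := add_le_add h3 hUsmall
      _ = 2*δ*Fs.card := by ring
  -- counting separated sets
  set NF := Zf.card ^ V.card * Zc.card ^ Rb.card with hNFdef
  have hblock : ∀ k ∈ Kg, ∀ v : Γ, ∀ x y : X,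
      dist (v • x) (v • y) ≤ 2*(C₁*δf) → dist ((k*v) • x) ((k*v) • y) ≤ ε := by
    intro k hk v x y hdv
    obtain ⟨i, j, hin, hjm, rfl⟩ := hKgstruct k hk
    have hx1 : ((c j * s₀ ^ i) * v) • x = c j • (s₀ ^ i • (v • x)) := by
      rw [mul_smul, mul_smul]
    have hy1 : ((c j * s₀ ^ i) * v) • y = c j • (s₀ ^ i • (v • y)) := by
      rw [mul_smul, mul_smul]
    rw [hx1, hy1]
    have hKc0 : 0 ≤ Klip (c j) := le_trans zero_le_one (hK1 _)
    have s2 : dist (s₀ ^ i • (v • x)) (s₀ ^ i • (v • y))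
        ≤ K0 ^ i * dist (v • x) (v • y) :=
      dist_pow_smul_le s₀ K0 (le_of_lt hK0pos)
        (by intro a b; rw [hK0def]; exact hKd s₀ a b) i (v • x) (v • y)
    have s3 : K0 ^ i ≤ K0 ^ n := pow_le_pow_right₀ hK0 (le_of_lt hin)
    have hfin : Klip (c j) * (K0 ^ i * dist (v • x) (v • y))
        ≤ Mx * (K0 ^ n * (2*(C₁*δf))) := by
      apply mul_le_mul (hMxj j hjm) ?_ ?_ (le_of_lt hMx0)
      · exact mul_le_mul s3 hdv dist_nonneg (pow_nonneg (le_of_lt hK0pos) n)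
      · exact mul_nonneg (pow_nonneg (le_of_lt hK0pos) _) dist_nonneg
    have heq : Mx * (K0 ^ n * (2*(C₁*δf))) = ε'/2 := by
      rw [hδfdef]
      field_simp
      ring
    calc dist (c j • (s₀ ^ i • (v • x))) (c j • (s₀ ^ i • (v • y)))
        ≤ Klip (c j) * dist (s₀ ^ i • (v • x)) (s₀ ^ i • (v • y)) := hKd _ _ _
      _ ≤ Klip (c j) * (K0 ^ i * dist (v • x) (v • y)) :=
          mul_le_mul_of_nonneg_left s2 hKc0
      _ ≤ Mx * (K0 ^ n * (2*(C₁*δf))) := hfin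
      _ = ε'/2 := heq
      _ ≤ ε := by linarith only [hε'ε, hε'0]
  have hrest : 2*(C₁*δc) ≤ ε := by
    have h : 2*(C₁*δc) = ε'/2 := by rw [hδcdef]; field_simp; ring
    rw [h]; linarith only [hε'ε, hε'0]
  have hRmem : ∀ s ∈ Fs, (¬ ∃ v ∈ V, ∃ k ∈ Kg, k * v = s) → s ∈ Rb := by
    intro s hsF hns
    rw [hRbdef]
    exact Finset.mem_filter.mpr ⟨hsF, hns⟩
  have hWbound : ∀ W : Finset X,
      (∀ x ∈ W, ∀ y ∈ W, x ≠ y → ∃ s ∈ Fs, ε < dist (s • x) (s • y)) → W.card ≤ NF := by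
    intro W hsepW
    rw [hNFdef]
    exact sep_card_le Fs V Rb Kg ε (C₁*δf) (C₁*δc) Zf Zc zf zc hzf1 hzc1 hzf2 hzc2
      hblock hrest hRmem W hsepW
  have hseple : sepCount (Set.univ : Set X)
      (fun x y => ∃ s ∈ Fs, ε < dist (s • x) (s • y)) ≤ NF := by
    apply csSup_le'
    rintro nn ⟨W, hWsub, hWsep, rfl⟩
    exact hWbound W hWsep
  have hlogN : Real.log (sepCount (Set.univ : Set X)
      (fun x y => ∃ s ∈ Fs, ε < dist (s • x) (s • y)))
      ≤ (V.card:ℝ)*LZf + (Rb.card:ℝ)*Cs := by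
    have hrhs0 : 0 ≤ (V.card:ℝ)*LZf + (Rb.card:ℝ)*Cs :=
      add_nonneg (mul_nonneg (Nat.cast_nonneg _) hLZf0) (mul_nonneg (Nat.cast_nonneg _) hCs0)
    rcases Nat.eq_zero_or_pos (sepCount (Set.univ : Set X)
        (fun x y => ∃ s ∈ Fs, ε < dist (s • x) (s • y))) with h0 | hpos
    · rw [h0]; simpa using hrhs0
    · have hNFpos : 0 < NF := lt_of_lt_of_le hpos hseple
      have hA : 0 < Zf.card ^ V.card := Nat.pos_of_ne_zero (by
        intro h; rw [hNFdef, h, zero_mul] at hNFpos; exact lt_irrefl 0 hNFpos)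
      have hB : 0 < Zc.card ^ Rb.card := Nat.pos_of_ne_zero (by
        intro h; rw [hNFdef, h, mul_zero] at hNFpos; exact lt_irrefl 0 hNFpos)
      have h1 : Real.log (sepCount (Set.univ : Set X)
          (fun x y => ∃ s ∈ Fs, ε < dist (s • x) (s • y))) ≤ Real.log (NF:ℝ) :=
        Real.log_le_log (by exact_mod_cast hpos) (by exact_mod_cast hseple)
      have h2 : Real.log (NF:ℝ)
          = (V.card:ℝ)*Real.log (Zf.card) + (Rb.card:ℝ)*Real.log (Zc.card) := by
        have hA' : (0:ℝ) < (Zf.card:ℝ)^V.card := by exact_mod_cast hA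
        have hB' : (0:ℝ) < (Zc.card:ℝ)^Rb.card := by exact_mod_cast hB
        rw [hNFdef]
        push_cast
        rw [Real.log_mul (ne_of_gt hA') (ne_of_gt hB'), Real.log_pow, Real.log_pow]
      rw [h2] at h1
      have h3 : (V.card:ℝ)*Real.log (Zf.card) ≤ (V.card:ℝ)*LZf :=
        mul_le_mul_of_nonneg_left hlogZf (Nat.cast_nonneg _)
      have h4 : (Rb.card:ℝ)*Real.log (Zc.card) ≤ (Rb.card:ℝ)*Cs :=
        mul_le_mul_of_nonneg_left hlogZc (Nat.cast_nonneg _)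
      linarith only [h1, h3, h4]
  -- assembling
  have hkkle : (kk:ℝ) ≤ (Fs.card:ℝ) * L / (Kg.card:ℝ) := by
    have hFr : (1:ℝ) ≤ (Fs.card:ℝ)/(Kg.card:ℝ) := by
      rw [le_div_iff₀ hrposR, one_mul]
      exact_mod_cast hrF
    have hsplit : (Fs.card:ℝ)*L/(Kg.card:ℝ)
        = (Fs.card:ℝ)*Real.log (1/δ)/(Kg.card:ℝ) + (Fs.card:ℝ)/(Kg.card:ℝ) := by
      rw [hLdef]; ring
    rcases Nat.eq_zero_or_pos ⌈av⌉₊ with h0 | hcl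
    · have hkk1' : kk = 1 := by rw [hkkdef, h0]; simp
      rw [hkk1']
      rw [hsplit]
      have hterm0 : 0 ≤ (Fs.card:ℝ)*Real.log (1/δ)/(Kg.card:ℝ) :=
        div_nonneg (mul_nonneg (Nat.cast_nonneg _) hlogδ) (Nat.cast_nonneg _)
      push_cast
      linarith only [hterm0, hFr]
    · have hkkeq : kk = ⌈av⌉₊ := hkkdef ▸ max_eq_right hcl
      have hcl' : (⌈av⌉₊:ℝ) < av + 1 := Nat.ceil_lt_add_one hav0
      rw [hkkeq, hsplit, ← havdef]
      linarith only [hcl', hFr]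
  have hterm1 : L * LZf ≤ (Kg.card:ℝ) * η / 2 := by
    rw [hKgcard, hLZfdef]
    push_cast
    have e2' : (n:ℝ)*(L*((q:ℝ)*Real.log K0)) ≤ (n:ℝ)*((m:ℝ)*η/4) :=
      mul_le_mul_of_nonneg_left hmb (by positivity)
    have e1' : L*Cm ≤ (n:ℝ)*η/4 := hnb
    have hnm : (n:ℝ) ≤ (n:ℝ)*(m:ℝ) := le_mul_of_one_le_right (by positivity) hm1
    have hnm' : (n:ℝ)*η/4 ≤ ((n:ℝ)*(m:ℝ))*η/4 := by
      apply div_le_div_of_nonneg_right ?_ (by norm_num)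
      exact mul_le_mul_of_nonneg_right hnm (le_of_lt hη)
    have hfin : L*(Cm + (q:ℝ)*((n:ℝ)*Real.log K0))
        = L*Cm + (n:ℝ)*(L*((q:ℝ)*Real.log K0)) := by ring
    rw [hfin]
    have hfin2 : (n:ℝ)*((m:ℝ)*η/4) = ((n:ℝ)*(m:ℝ))*η/4 := by ring
    rw [hfin2] at e2'
    linarith only [e1', e2', hnm']
  rw [div_le_iff₀ hFpos]
  have hVb : (V.card:ℝ) ≤ (kk:ℝ) := by exact_mod_cast hVcard
  calc Real.log (sepCount (Set.univ : Set X)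
        (fun x y => ∃ s ∈ Fs, ε < dist (s • x) (s • y)))
      ≤ (V.card:ℝ)*LZf + (Rb.card:ℝ)*Cs := hlogN
    _ ≤ (kk:ℝ)*LZf + (2*δ*Fs.card)*Cs :=
        add_le_add (mul_le_mul_of_nonneg_right hVb hLZf0)
          (mul_le_mul_of_nonneg_right hRsmall hCs0)
    _ ≤ ((Fs.card:ℝ)*L/(Kg.card:ℝ))*LZf + (2*δ*Fs.card)*Cs := by
        have h := mul_le_mul_of_nonneg_right hkkle hLZf0
        linarith only [h]
    _ = ((Fs.card:ℝ)/(Kg.card:ℝ))*(L*LZf) + (2*(δ*Cs))*(Fs.card:ℝ) := by ring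
    _ ≤ ((Fs.card:ℝ)/(Kg.card:ℝ))*((Kg.card:ℝ)*η/2) + (η/2)*(Fs.card:ℝ) :=
        add_le_add
          (mul_le_mul_of_nonneg_left hterm1
            (div_nonneg (Nat.cast_nonneg _) (Nat.cast_nonneg _)))
          (mul_le_mul_of_nonneg_right hδCs (le_of_lt hFpos))
    _ = η * Fs.card := by
        field_simp
        ring



set_option maxHeartbeats 1000000 in
/-- **Lemma 5.9 (vanishing entropy for Lipschitz actions on doubling spaces).**
Let `Γ` be a countable discrete amenable group containing an element `s₀` of infinite order
whose cyclic subgroup has infinite index.  Let `Γ` act on a compact metric space `X` by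
Lipschitz homeomorphisms, and assume `X` satisfies a polynomial covering bound: there are
`q ∈ ℕ` and `C₁, C₂ ≥ 1` such that for every `δ' ∈ (0,1)` there is a `C₁δ'`-dense subset of
`X` of cardinality at most `C₂ (4/δ')^q`.  Then for every `ε > 0`,
`limsup_F log N_ε(X, θ_{F,∞})/|F| ≤ 0`. -/
theorem limsup_sepCount_le_zero_of_smooth_like_action
    {Γ : Type*} [Group Γ] [Countable Γ] [DecidableEq Γ]
    (hamen : ∀ K : Finset Γ, K.Nonempty → ∀ δ : ℝ, 0 < δ → ∃ F : Finset Γ, memApproxInv K δ F)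
    {X : Type*} [MetricSpace X] [CompactSpace X] [MulAction Γ X]
    (hLip : ∀ s : Γ, ∃ Ks : ℝ, 1 ≤ Ks ∧ ∀ x y : X, dist (s • x) (s • y) ≤ Ks * dist x y)
    (s₀ : Γ) (hord : ¬ IsOfFinOrder s₀) (hindex : (Subgroup.zpowers s₀).index = 0)
    (q : ℕ) (C₁ C₂ : ℝ) (hC₁ : 1 ≤ C₁) (hC₂ : 1 ≤ C₂)
    (hcov : ∀ δ' : ℝ, 0 < δ' → δ' < 1 → ∃ Z : Finset X,
      (Z.card : ℝ) ≤ C₂ * (4 / δ') ^ q ∧ ∀ x : X, ∃ z ∈ Z, dist x z ≤ C₁ * δ')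
    (ε : ℝ) (hε : 0 < ε) :
    limsupFolner (fun F : Finset Γ =>
      Real.log (sepCount (Set.univ : Set X)
          (fun x y => ∃ s ∈ F, ε < dist (s • x) (s • y))) / (F.card : ℝ)) ≤ 0 := by
  classical
  choose Klip hK1 hKd using hLip
  set H := Subgroup.zpowers s₀ with hH
  have hinf : Infinite (Γ ⧸ H) := by
    have h0 : Nat.card (Γ ⧸ H) = 0 := hindex
    rcases Nat.card_eq_zero.mp h0 with h | h
    · exact absurd (⟨((1 : Γ) : Γ ⧸ H)⟩ : Nonempty _) (not_nonempty_iff.mpr h)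
    · exact h
  set emb : ℕ ↪ Γ ⧸ H := Infinite.natEmbedding (Γ ⧸ H) with hemb
  set c : ℕ → Γ := fun j => (emb j).out with hcdef
  have hc : ∀ j, ((c j : Γ) : Γ ⧸ H) = emb j := fun j => QuotientGroup.out_eq' _
  have hcinj : ∀ j j', (c j')⁻¹ * c j ∈ H → j = j' := by
    intro j j' hmem
    have h1 : ((c j' : Γ) : Γ ⧸ H) = ((c j : Γ) : Γ ⧸ H) := QuotientGroup.eq.mpr hmem
    rw [hc, hc] at h1
    exact (emb.injective h1).symm
  have hzinj : Function.Injective fun k : ℤ => s₀ ^ k :=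
    injective_zpow_iff_not_isOfFinOrder.mpr hord
  refine le_of_forall_pos_le_add fun η hη => ?_
  -- scales and constants
  set ε' := min ε 1 with hε'def
  have hε'0 : 0 < ε' := lt_min hε one_pos
  have hε'1 : ε' ≤ 1 := min_le_right _ _
  have hε'ε : ε' ≤ ε := min_le_left _ _
  clear_value ε'
  have hC₁0 : (0:ℝ) < C₁ := lt_of_lt_of_le one_pos hC₁
  have hC₂0 : (0:ℝ) < C₂ := lt_of_lt_of_le one_pos hC₂
  set Cs := Real.log C₂ + q * Real.log (16*C₁/ε') with hCsdef
  have h16 : (1:ℝ) ≤ 16*C₁/ε' := by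
    rw [le_div_iff₀ hε'0]; nlinarith
  have hCs0 : 0 ≤ Cs :=
    add_nonneg (Real.log_nonneg hC₂) (mul_nonneg (Nat.cast_nonneg q) (Real.log_nonneg h16))
  clear_value Cs
  set δ := min (1/2) (η/(4*(Cs+1))) with hδdef
  have hδ0 : 0 < δ := lt_min (by norm_num) (by positivity)
  have hδ2 : δ ≤ 1/2 := min_le_left _ _
  have hδr : δ ≤ η/(4*(Cs+1)) := min_le_right _ _
  clear_value δ
  have hδCs : 2*(δ*Cs) ≤ η/2 := by
    have h1 : δ ≤ η/(4*(Cs+1)) := hδr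
    have h2 : δ*Cs ≤ (η/(4*(Cs+1)))*Cs := mul_le_mul_of_nonneg_right h1 hCs0
    have h3 : (η/(4*(Cs+1)))*Cs ≤ η/4 := by
      rw [div_mul_eq_mul_div, div_le_div_iff₀ (by positivity) (by norm_num)]
      nlinarith
    linarith
  have hδ1' : (1:ℝ) ≤ 1/δ := by
    rw [le_div_iff₀ hδ0]
    linarith
  have hlogδ : 0 ≤ Real.log (1/δ) := Real.log_nonneg hδ1'
  set L := Real.log (1/δ) + 1 with hLdef
  clear_value L
  have hL1 : 1 ≤ L := by rw [hLdef]; linarith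
  have hLpos : 0 < L := by linarith
  set K0 := Klip s₀ with hK0def
  clear_value K0
  have hK0 : 1 ≤ K0 := by rw [hK0def]; exact hK1 s₀
  have hK0pos : (0:ℝ) < K0 := lt_of_lt_of_le one_pos hK0
  have hlogK0 : 0 ≤ Real.log K0 := Real.log_nonneg hK0
  set m := ⌈4*L*((q:ℝ)*Real.log K0)/η⌉₊ + 1 with hmdef
  clear_value m
  have hm0 : 0 < m := by rw [hmdef]; exact Nat.succ_pos _
  have hm1 : (1:ℝ) ≤ (m:ℝ) := by exact_mod_cast hm0
  have hmb : L*((q:ℝ)*Real.log K0) ≤ (m:ℝ)*η/4 := by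
    have h1 : (4*L*((q:ℝ)*Real.log K0))/η ≤ (m:ℝ) := by
      calc (4*L*((q:ℝ)*Real.log K0))/η ≤ (⌈4*L*((q:ℝ)*Real.log K0)/η⌉₊ : ℝ) := Nat.le_ceil _
        _ ≤ (m:ℝ) := by rw [hmdef]; push_cast; linarith
    rw [div_le_iff₀ hη] at h1
    linarith
  have hrangemne : ((Finset.range m).image fun j => Klip (c j)).Nonempty :=
    (Finset.nonempty_range_iff.mpr (Nat.pos_iff_ne_zero.mp hm0)).image _
  set Mx := ((Finset.range m).image fun j => Klip (c j)).max' hrangemne with hMxdef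
  clear_value Mx
  have hMxj : ∀ j, j < m → Klip (c j) ≤ Mx := by
    intro j hj
    rw [hMxdef]
    exact Finset.le_max' ((Finset.range m).image fun j => Klip (c j)) _
      (Finset.mem_image_of_mem _ (Finset.mem_range.mpr hj))
  have hMx1 : 1 ≤ Mx := le_trans (hK1 (c 0)) (hMxj 0 hm0)
  have hMx0 : (0:ℝ) < Mx := lt_of_lt_of_le one_pos hMx1
  set Cm := Real.log C₂ + q * Real.log (16*C₁*Mx/ε') with hCmdef
  clear_value Cm
  have h16M : (1:ℝ) ≤ 16*C₁*Mx/ε' := by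
    rw [le_div_iff₀ hε'0]; nlinarith
  have hCm0 : 0 ≤ Cm := by
    rw [hCmdef]
    exact add_nonneg (Real.log_nonneg hC₂) (mul_nonneg (Nat.cast_nonneg q) (Real.log_nonneg h16M))
  set n := ⌈4*L*Cm/η⌉₊ + 1 with hndef
  clear_value n
  have hn0 : 0 < n := by rw [hndef]; exact Nat.succ_pos _
  have hn1 : (1:ℝ) ≤ (n:ℝ) := by exact_mod_cast hn0
  have hnb : L*Cm ≤ (n:ℝ)*η/4 := by
    have h1 : (4*L*Cm)/η ≤ (n:ℝ) := by
      calc (4*L*Cm)/η ≤ (⌈4*L*Cm/η⌉₊ : ℝ) := Nat.le_ceil _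
        _ ≤ (n:ℝ) := by rw [hndef]; push_cast; linarith
    rw [div_le_iff₀ hη] at h1
    linarith
  have hK0n : (0:ℝ) < K0 ^ n := pow_pos hK0pos n
  have hK0n1 : (1:ℝ) ≤ K0 ^ n := one_le_pow₀ hK0
  -- the grid
  set Kg := (Finset.range n ×ˢ Finset.range m).image (fun p : ℕ × ℕ => c p.2 * s₀ ^ p.1)
    with hKgdef
  have hKgcard : Kg.card = n * m := by
    rw [hKgdef, Finset.card_image_of_injOn, Finset.card_product, Finset.card_range,
      Finset.card_range]
    intro p _ p' _ hpe
    simp only at hpe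
    have h2 : s₀ ^ ((p'.1:ℤ) - (p.1:ℤ)) = (c p'.2)⁻¹ * c p.2 := by
      rw [zpow_sub, zpow_natCast, zpow_natCast]
      have hcc : c p.2 = c p'.2 * s₀ ^ p'.1 * (s₀ ^ p.1)⁻¹ := by
        rw [← hpe]; group
      rw [hcc]; group
    have hmem : (c p'.2)⁻¹ * c p.2 ∈ H := by
      rw [← h2, hH]
      exact Subgroup.mem_zpowers_iff.mpr ⟨_, rfl⟩
    have hj : p.2 = p'.2 := hcinj _ _ hmem
    have hceq : c p.2 = c p'.2 := by rw [hj]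
    rw [hceq] at hpe
    have hpow : s₀ ^ p.1 = s₀ ^ p'.1 := mul_left_cancel hpe
    have hz : s₀ ^ (p.1:ℤ) = s₀ ^ (p'.1:ℤ) := by
      rw [zpow_natCast, zpow_natCast, hpow]
    have hi : (p.1:ℤ) = (p'.1:ℤ) := hzinj hz
    exact Prod.ext (by exact_mod_cast hi) hj
  have hKgmem : ∀ i j, i < n → j < m → c j * s₀ ^ i ∈ Kg := by
    intro i j hi hj
    have hpair : ((i, j) : ℕ × ℕ) ∈ Finset.range n ×ˢ Finset.range m :=
      Finset.mem_product.mpr ⟨Finset.mem_range.mpr hi, Finset.mem_range.mpr hj⟩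
    rw [hKgdef]
    exact Finset.mem_image_of_mem _ hpair
  set Kbig := Kg ∪ Kg.image (fun k => k⁻¹) with hKbigdef
  have hKgsub : Kg ⊆ Kbig := Finset.subset_union_left
  have hKbne : Kbig.Nonempty :=
    ⟨c 0 * s₀ ^ 0, hKgsub (hKgmem 0 0 hn0 hm0)⟩
  -- covering data
  set δf := ε'/(4*C₁*Mx*K0^n) with hδfdef
  clear_value δf
  have hδf0 : 0 < δf := by rw [hδfdef]; positivity
  have hδf1 : δf < 1 := by
    rw [hδfdef, div_lt_one (by positivity)]
    have h1 : (1:ℝ) ≤ Mx*K0^n := by nlinarith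
    have h2 : (1:ℝ) ≤ C₁*(Mx*K0^n) := by nlinarith
    nlinarith
  obtain ⟨Zf, hZfcard, hZfd⟩ := hcov δf hδf0 hδf1
  set δc := ε'/(4*C₁) with hδcdef
  clear_value δc
  have hδc0 : 0 < δc := by rw [hδcdef]; positivity
  have hδc1 : δc < 1 := by
    rw [hδcdef, div_lt_one (by positivity)]
    nlinarith
  obtain ⟨Zc, hZccard, hZcd⟩ := hcov δc hδc0 hδc1
  choose zf hzf1 hzf2 using hZfd
  choose zc hzc1 hzc2 using hZcd
  set LZf := Cm + (q:ℝ)*((n:ℝ)*Real.log K0) with hLZfdef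
  clear_value LZf
  have hLZf0 : 0 ≤ LZf := by
    rw [hLZfdef]
    exact add_nonneg hCm0 (mul_nonneg (Nat.cast_nonneg q) (mul_nonneg (Nat.cast_nonneg n) hlogK0))
  have hlogZf : Real.log (Zf.card) ≤ LZf := by
    rcases Nat.eq_zero_or_pos Zf.card with h0 | hpos
    · rw [h0]; simp only [Nat.cast_zero, Real.log_zero]; exact hLZf0
    · have h1 : Real.log (Zf.card) ≤ Real.log (C₂ * (4/δf)^q) :=
        Real.log_le_log (by exact_mod_cast hpos) hZfcard
      have h2 : (4:ℝ)/δf = (16*C₁*Mx/ε')*K0^n := by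
        rw [hδfdef]; field_simp; ring
      rw [h2] at h1
      have h3 : Real.log (C₂ * ((16*C₁*Mx/ε')*K0^n)^q)
          = Real.log C₂ + q*(Real.log (16*C₁*Mx/ε') + (n:ℝ)*Real.log K0) := by
        rw [Real.log_mul (ne_of_gt hC₂0) (by positivity),
          Real.log_pow, Real.log_mul (by positivity) (by positivity), Real.log_pow]
      rw [h3] at h1
      rw [hLZfdef, hCmdef]
      linarith
  have hlogZc : Real.log (Zc.card) ≤ Cs := by
    rcases Nat.eq_zero_or_pos Zc.card with h0 | hpos
    · rw [h0]; simp only [Nat.cast_zero, Real.log_zero]; exact hCs0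
    · have h1 : Real.log (Zc.card) ≤ Real.log (C₂ * (4/δc)^q) :=
        Real.log_le_log (by exact_mod_cast hpos) hZccard
      have h2 : (4:ℝ)/δc = 16*C₁/ε' := by
        rw [hδcdef]; field_simp; ring
      rw [h2] at h1
      have h3 : Real.log (C₂ * (16*C₁/ε')^q)
          = Real.log C₂ + q*Real.log (16*C₁/ε') := by
        rw [Real.log_mul (ne_of_gt hC₂0) (by positivity), Real.log_pow]
      rw [h3] at h1
      rw [hCsdef]
      linarith
  -- abbreviate the function
  set ψ : Finset Γ → ℝ := fun F : Finset Γ =>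
    Real.log (sepCount (Set.univ : Set X)
        (fun x y => ∃ s ∈ F, ε < dist (s • x) (s • y))) / (F.card : ℝ) with hψdef
  have hψ0 : ∀ F : Finset Γ, 0 ≤ ψ F := by
    intro F
    apply div_nonneg _ (Nat.cast_nonneg _)
    rcases Nat.eq_zero_or_pos (sepCount (Set.univ : Set X)
        (fun x y => ∃ s ∈ F, ε < dist (s • x) (s • y))) with h0 | hpos
    · rw [h0]; simp
    · exact Real.log_nonneg (by exact_mod_cast hpos)
  have hKginv : ∀ k ∈ Kg, k⁻¹ ∈ Kbig := by
    intro k hk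
    rw [hKbigdef]
    exact Finset.mem_union_right _ (Finset.mem_image_of_mem _ hk)
  have hKgstruct : ∀ k ∈ Kg, ∃ i j : ℕ, i < n ∧ j < m ∧ c j * s₀ ^ i = k := by
    intro k hk
    rw [hKgdef] at hk
    obtain ⟨p, hp, rfl⟩ := Finset.mem_image.mp hk
    obtain ⟨hp1, hp2⟩ := Finset.mem_product.mp hp
    exact ⟨p.1, p.2, Finset.mem_range.mp hp1, Finset.mem_range.mp hp2, rfl⟩
  have key : ∀ Fs : Finset Γ, memApproxInv Kbig δ Fs → ψ Fs ≤ η := by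
    intro Fs hFs
    rw [hψdef]
    exact key_lemma ε ε' η δ L Cs Cm LZf K0 Mx C₁ q n m c s₀ Klip Kg Kbig Zf Zc zf zc
      δf δc hη hδ0 hδ2 hδCs hlogδ hLdef hε'0 hε'ε hC₁0 hK1 hKd hK0def hK0 hMxj hMx0
      hn0 hm0 hm1 hδfdef hδcdef hKgcard hKgsub hKginv hKgstruct hzf1 hzf2 hzc1 hzc2
      hlogZf hlogZc hLZf0 hCs0 hLZfdef hnb hmb Fs hFs
  -- conclude via inf/sup
  have hbdd : BddBelow (Set.range fun p : {p : Finset Γ × ℝ // p.1.Nonempty ∧ 0 < p.2} =>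
      ⨆ F : {F : Finset Γ // memApproxInv p.1.1 p.1.2 F}, ψ F.1) := by
    refine ⟨0, ?_⟩
    rintro x ⟨p, rfl⟩
    obtain ⟨F₀, hF₀⟩ := hamen p.1.1 p.2.1 p.1.2 p.2.2
    by_cases hb : BddAbove (Set.range fun F : {F : Finset Γ // memApproxInv p.1.1 p.1.2 F} => ψ F.1)
    · exact le_trans (hψ0 F₀) (le_ciSup hb ⟨F₀, hF₀⟩)
    · exact (Real.iSup_of_not_bddAbove hb).ge
  have hnonF : Nonempty {F : Finset Γ // memApproxInv Kbig δ F} := by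
    obtain ⟨F₀, hF₀⟩ := hamen Kbig hKbne δ hδ0
    exact ⟨⟨F₀, hF₀⟩⟩
  calc limsupFolner ψ
      ≤ ⨆ F : {F : Finset Γ // memApproxInv Kbig δ F}, ψ F.1 :=
        ciInf_le hbdd ⟨(Kbig, δ), hKbne, hδ0⟩
    _ ≤ 0 + η := by
        rw [zero_add]
        exact ciSup_le fun F => key F.1 F.2
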